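/- Validity of WSU-UX weights: suppose π_{i,1} = 1/K, and at each round t an index I_t ∈ [K] is chosen, the estimated loss is ℓ̂_{I_t,t} = ℓ_{I_t,t}/π̃_{I_t,t} with ℓ̂_{i,t} = 0 for i ≠ I_t, where π̃_{i,t} = (1-γ)π_{i,t} + γ/K, and the update is π_{i,t+1} = π_{i,t}(1 - η(ℓ̂_{i,t} - Σ_j π_{j,t} ℓ̂_{j,t})). If ηK/γ ≤ 1/2, 0 < η, γ < 1/2, then for all t, π_t and π̃_t are valid probability distributions (nonnegative entries summing to 1). -/

import Mathlib

/-- Validity of WSU-UX weights: if ηK/γ ≤ 1/2 and 0 < η, γ < 1/2, the weights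
π_t and the exploration-mixed weights π̃_t are valid probability distributions. -/
theorem wsu_ux_weights_valid (K : ℕ) (hK : 1 ≤ K)
    (ℓ : ℕ → Fin K → ℝ) (hℓ : ∀ t i, ℓ t i ∈ Set.Icc (0:ℝ) 1)
    (I : ℕ → Fin K) (η γ : ℝ)
    (hη0 : 0 < η) (hη2 : η < 1/2) (hγ0 : 0 < γ) (hγ2 : γ < 1/2)
    (hmix : η * K / γ ≤ 1/2)
    (π πt : ℕ → Fin K → ℝ)
    (hinit : ∀ i, π 0 i = 1 / K)
    (hπt : ∀ t i, πt t i = (1 - γ) * π t i + γ / K)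
    (lhat : ℕ → Fin K → ℝ)
    (hlhat : ∀ t i, lhat t i = if i = I t then ℓ t i / πt t i else 0)
    (hupd : ∀ t i, π (t+1) i = π t i * (1 - η * (lhat t i - ∑ j, π t j * lhat t j))) :
    ∀ t, ((∀ i, 0 ≤ π t i) ∧ ∑ i, π t i = 1) ∧
         ((∀ i, 0 ≤ πt t i) ∧ ∑ i, πt t i = 1) := by
  have hKR : (1:ℝ) ≤ K := by exact_mod_cast hK
  have hK0 : (0:ℝ) < K := lt_of_lt_of_le one_pos hKR
  have hKne : (K:ℝ) ≠ 0 := ne_of_gt hK0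
  have step : ∀ t, ((∀ i, 0 ≤ π t i) ∧ ∑ i, π t i = 1) →
      ((∀ i, 0 ≤ πt t i) ∧ ∑ i, πt t i = 1) := by
    rintro t ⟨hnn, hsum⟩
    constructor
    · intro i
      rw [hπt]
      have h1 : 0 ≤ (1 - γ) * π t i := mul_nonneg (by linarith) (hnn i)
      have h2 : 0 ≤ γ / K := by positivity
      linarith
    · simp only [hπt]
      rw [Finset.sum_add_distrib, ← Finset.mul_sum, hsum, Finset.sum_const,
        Finset.card_univ, Fintype.card_fin, nsmul_eq_mul]
      field_simp
      ring
  intro t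
  induction t with
  | zero =>
    have h1 : (∀ i, 0 ≤ π 0 i) ∧ ∑ i, π 0 i = 1 := by
      constructor
      · intro i; rw [hinit]; positivity
      · simp only [hinit, Finset.sum_const, Finset.card_univ, Fintype.card_fin,
          nsmul_eq_mul]
        field_simp
    exact ⟨h1, step 0 h1⟩
  | succ t ih =>
    obtain ⟨⟨hnn, hsum⟩, _⟩ := ih
    have hπtlb : ∀ i, γ / K ≤ πt t i := by
      intro i; rw [hπt]
      have h1 : 0 ≤ (1 - γ) * π t i := mul_nonneg (by linarith) (hnn i)
      linarith
    have hπtpos : ∀ i, 0 < πt t i := fun i =>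
      lt_of_lt_of_le (by positivity) (hπtlb i)
    have hlnn : ∀ i, 0 ≤ lhat t i := by
      intro i; rw [hlhat]
      split
      · exact div_nonneg (hℓ t i).1 (hπtpos i).le
      · exact le_refl _
    have hlub : ∀ i, lhat t i ≤ K / γ := by
      intro i; rw [hlhat]
      split
      · have h1 : ℓ t i ≤ 1 := (hℓ t i).2
        have h2 : γ / K > 0 := by positivity
        have h3 : ℓ t i / πt t i ≤ 1 / (γ / K) :=
          div_le_div₀ zero_le_one h1 h2 (hπtlb i)
        rwa [one_div_div] at h3
      · positivity
    set S := ∑ j, π t j * lhat t j with hS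
    have hSnn : 0 ≤ S :=
      Finset.sum_nonneg fun j _ => mul_nonneg (hnn j) (hlnn j)
    have hfac : ∀ i, 0 ≤ 1 - η * (lhat t i - S) := by
      intro i
      have h1 : η * lhat t i ≤ η * (K / γ) :=
        mul_le_mul_of_nonneg_left (hlub i) hη0.le
      have h2 : η * (K / γ) ≤ 1/2 := by
        have : η * (K / γ) = η * K / γ := by ring
        linarith [hmix, this ▸ le_refl (η * (K/γ))]
      have h3 : 0 ≤ η * S := mul_nonneg hη0.le hSnn
      nlinarith
    have hnn' : ∀ i, 0 ≤ π (t+1) i := by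
      intro i; rw [hupd]; exact mul_nonneg (hnn i) (hfac i)
    have hsum' : ∑ i, π (t+1) i = 1 := by
      have heq : ∀ i ∈ Finset.univ, π (t+1) i =
          π t i - η * (π t i * lhat t i) + η * S * π t i := by
        intro i _; rw [hupd]; ring
      rw [Finset.sum_congr rfl heq]
      rw [Finset.sum_add_distrib, Finset.sum_sub_distrib, ← Finset.mul_sum,
        ← Finset.mul_sum, hsum, ← hS]
      ring
    exact ⟨⟨hnn', hsum'⟩, step (t+1) ⟨hnn', hsum'⟩⟩
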